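/- Let Ω = {0,1} with 𝓕 = 2^Ω and ℙ{0} = ℙ{1} = 1/2, let 𝒢 = {G} with G ≡ 1, and ℋ = {H₀} with H₀(0) = 1/2 and H₀(1) = 3/2. Then V(x) = 2x for 0 ≤ x < 1/4, V(x) = (2x+1)/3 for 1/4 ≤ x < 1, and V(x) = 1 for x ≥ 1; while V₁(x) = 0 for 0 ≤ x < 1/4, V₁(x) = 1/2 for 1/4 ≤ x < 1, and V₁(x) = 1 for x ≥ 1. In particular V₁(x) < V(x) for every x ∈ (0,1) with x ≠ 1/4, so the pure testing value can be strictly smaller than the randomized testing value. -/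
import Mathlib


open MeasureTheory

namespace QH

variable {Ω : Type*} [MeasurableSpace Ω]

/-- The set of nonnegative measurable random variables. -/
def L0plus (Ω : Type*) [MeasurableSpace Ω] : Set (Ω → ℝ) :=
  {f | Measurable f ∧ ∀ ω, 0 ≤ f ω}

/-- A randomized test: a measurable function with values in `[0,1]`. -/
def IsRandTest (X : Ω → ℝ) : Prop :=
  Measurable X ∧ ∀ ω, X ω ∈ Set.Icc (0 : ℝ) 1

/-- The feasible randomized tests for significance level `x` and null collection `H`. -/
def Tests (μ : Measure Ω) (H : Set (Ω → ℝ)) (x : ℝ) : Set (Ω → ℝ) :=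
  {X | IsRandTest X ∧ ∀ h ∈ H, ∫ ω, h ω * X ω ∂μ ≤ x}

/-- The worst-case power of a test `X` over the alternative collection `G`. -/
noncomputable def powerInf (μ : Measure Ω) (G : Set (Ω → ℝ)) (X : Ω → ℝ) : ℝ :=
  sInf ((fun g => ∫ ω, g ω * X ω ∂μ) '' G)

/-- The value of the randomized composite hypothesis testing problem. -/
noncomputable def V (μ : Measure Ω) (G H : Set (Ω → ℝ)) (x : ℝ) : ℝ :=
  sSup (powerInf μ G '' Tests μ H x)

/-- The value of the pure composite hypothesis testing problem. -/
noncomputable def V1 (μ : Measure Ω) (G H : Set (Ω → ℝ)) (x : ℝ) : ℝ :=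
  sSup (powerInf μ G '' {X ∈ Tests μ H x | ∀ ω, X ω = 0 ∨ X ω = 1})

/-- The set `ℋₓ` of nonnegative random variables that satisfy the budget
constraint against every feasible randomized test. -/
def HxSet (μ : Measure Ω) (H : Set (Ω → ℝ)) (x : ℝ) : Set (Ω → ℝ) :=
  {h | h ∈ L0plus Ω ∧ ∀ X ∈ Tests μ H x, ∫ ω, h ω * X ω ∂μ ≤ x}

/-- A set of (nonnegative) random variables is closed under convergence in probability,
as a subset of `L⁰⁺`. -/
def ClosedInProb (μ : Measure Ω) (S : Set (Ω → ℝ)) : Prop :=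
  ∀ (f : ℕ → Ω → ℝ) (g : Ω → ℝ), (∀ n, f n ∈ S) → g ∈ L0plus Ω →
    TendstoInMeasure μ f Filter.atTop g → g ∈ S

/-- The closure of a set of random variables under convergence in probability. -/
def clProb (μ : Measure Ω) (S : Set (Ω → ℝ)) : Set (Ω → ℝ) :=
  {g | ∃ f : ℕ → Ω → ℝ, (∀ n, f n ∈ S) ∧ TendstoInMeasure μ f Filter.atTop g}

/-- Assumption (A1): `𝒢, ℋ ⊆ L⁰⁺`, `sup_{X ∈ 𝒢∪ℋ} 𝔼[X] < ∞`, and `𝒢` is convex and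
closed under convergence in probability. -/
def A1 (μ : Measure Ω) (G H : Set (Ω → ℝ)) : Prop :=
  G ⊆ L0plus Ω ∧ H ⊆ L0plus Ω ∧ (∀ f ∈ G ∪ H, Integrable f μ) ∧
  BddAbove ((fun f => ∫ ω, f ω ∂μ) '' (G ∪ H)) ∧
  Convex ℝ G ∧ ClosedInProb μ G

/-- The smallest σ-algebra making every random variable in `G ∪ H` measurable. -/
def sigmaGen (G H : Set (Ω → ℝ)) : MeasurableSpace Ω :=
  ⨆ f ∈ G ∪ H, MeasurableSpace.comap f inferInstance

/-- The Neyman–Pearson conditions at level `x` for the tuple `(Ĝ, Ĥ, â, X̂, B)`. -/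
def NPconds (μ : Measure Ω) (G H : Set (Ω → ℝ)) (x : ℝ)
    (Ghat Hhat : Ω → ℝ) (ahat : ℝ) (Xhat B : Ω → ℝ) : Prop :=
  Ghat ∈ G ∧ Hhat ∈ clProb μ (convexHull ℝ H) ∧ 0 ≤ ahat ∧ Xhat ∈ Tests μ H x ∧
  Measurable B ∧ (∀ ω, B ω ∈ Set.Icc (0 : ℝ) 1) ∧
  (∀ ω, Xhat ω = (if ahat * Hhat ω < Ghat ω then 1 else 0)
      + B ω * (if Ghat ω = ahat * Hhat ω then 1 else 0)) ∧
  (∀ h ∈ H, ∫ ω, h ω * Xhat ω ∂μ ≤ ∫ ω, Hhat ω * Xhat ω ∂μ) ∧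
  (∫ ω, Hhat ω * Xhat ω ∂μ = x) ∧
  (∀ g ∈ G, ∫ ω, Ghat ω * Xhat ω ∂μ ≤ ∫ ω, g ω * Xhat ω ∂μ)

end QH

/-- The uniform probability measure on the two-point space `Ω = {0,1}` (here `Bool`,
with `ω = 0` encoded as `false` and `ω = 1` as `true`). -/
noncomputable def QH.muTwo : MeasureTheory.Measure Bool :=
  (1 / 2 : ENNReal) • (MeasureTheory.Measure.dirac false + MeasureTheory.Measure.dirac true)

namespace QH

lemma int_muTwo (f : Bool → ℝ) : ∫ b, f b ∂QH.muTwo = (f false + f true) / 2 := by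
  rw [QH.muTwo, integral_smul_measure,
    integral_add_measure (by exact Integrable.of_finite) (by exact Integrable.of_finite),
    integral_dirac, integral_dirac]
  simp
  ring

lemma power_eq (X : Bool → ℝ) :
    powerInf muTwo ({fun _ => 1} : Set (Bool → ℝ)) X = (X false + X true) / 2 := by
  rw [powerInf, Set.image_singleton, csInf_singleton]
  rw [show (fun ω => (1 : ℝ) * X ω) = X by funext ω; ring]
  exact int_muTwo X

lemma tests_iff (x : ℝ) (X : Bool → ℝ) :
    X ∈ Tests muTwo ({fun b => if b then (3/2 : ℝ) else 1/2} : Set (Bool → ℝ)) x ↔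
      (∀ b, X b ∈ Set.Icc (0:ℝ) 1) ∧ X false / 4 + 3 * X true / 4 ≤ x := by
  constructor
  · rintro ⟨⟨-, hv⟩, hint⟩
    refine ⟨hv, ?_⟩
    have := hint _ rfl
    rw [int_muTwo] at this
    simp at this
    linarith
  · rintro ⟨hv, hle⟩
    refine ⟨⟨by measurability, hv⟩, ?_⟩
    rintro h rfl
    rw [int_muTwo]
    simp
    linarith

end QH

/-- On `Ω = {0,1}` with `ℙ{0} = ℙ{1} = 1/2`, `𝒢 = {1}` and
`ℋ = {H₀}` with `H₀(0) = 1/2`, `H₀(1) = 3/2`, the randomized value is `V(x) = 2x` on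
`[0,1/4)`, `(2x+1)/3` on `[1/4,1)`, and `1` on `[1,∞)`, while the pure value is
`V₁(x) = 0` on `[0,1/4)`, `1/2` on `[1/4,1)`, and `1` on `[1,∞)`; in particular
`V₁(x) < V(x)` for every `x ∈ (0,1)` with `x ≠ 1/4`. -/

theorem stmt_17 :
    let Gs : Set (Bool → ℝ) := {fun _ => 1}
    let Hs : Set (Bool → ℝ) := {fun b => if b then (3 / 2 : ℝ) else 1 / 2}
    (∀ x : ℝ, 0 ≤ x → x < 1 / 4 → QH.V QH.muTwo Gs Hs x = 2 * x) ∧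
    (∀ x : ℝ, 1 / 4 ≤ x → x < 1 → QH.V QH.muTwo Gs Hs x = (2 * x + 1) / 3) ∧
    (∀ x : ℝ, 1 ≤ x → QH.V QH.muTwo Gs Hs x = 1) ∧
    (∀ x : ℝ, 0 ≤ x → x < 1 / 4 → QH.V1 QH.muTwo Gs Hs x = 0) ∧
    (∀ x : ℝ, 1 / 4 ≤ x → x < 1 → QH.V1 QH.muTwo Gs Hs x = 1 / 2) ∧
    (∀ x : ℝ, 1 ≤ x → QH.V1 QH.muTwo Gs Hs x = 1) ∧
    (∀ x : ℝ, 0 < x → x < 1 → x ≠ 1 / 4 →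
      QH.V1 QH.muTwo Gs Hs x < QH.V QH.muTwo Gs Hs x) := by
  intro Gs Hs
  have hV1 : ∀ x : ℝ, 0 ≤ x → x < 1 / 4 → QH.V QH.muTwo Gs Hs x = 2 * x := by
    intro x hx0 hx
    apply IsGreatest.csSup_eq
    constructor
    · refine ⟨fun b => if b then 0 else 4 * x, ?_, ?_⟩
      · rw [QH.tests_iff]
        constructor
        · intro b; cases b <;> simp <;> constructor <;> linarith
        · simp; try linarith
      · rw [QH.power_eq]; simp; try ring
    · rintro y ⟨X, hX, rfl⟩
      rw [QH.tests_iff] at hX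
      obtain ⟨hv, hc⟩ := hX
      have h0 := (hv false).1; have h1 := (hv true).1
      rw [QH.power_eq]; linarith
  have hV2 : ∀ x : ℝ, 1 / 4 ≤ x → x < 1 → QH.V QH.muTwo Gs Hs x = (2 * x + 1) / 3 := by
    intro x hx0 hx
    apply IsGreatest.csSup_eq
    constructor
    · refine ⟨fun b => if b then (4 * x - 1) / 3 else 1, ?_, ?_⟩
      · rw [QH.tests_iff]
        constructor
        · intro b; cases b <;> simp <;> constructor <;> linarith
        · simp; try linarith
      · rw [QH.power_eq]; simp; try ring
    · rintro y ⟨X, hX, rfl⟩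
      rw [QH.tests_iff] at hX
      obtain ⟨hv, hc⟩ := hX
      have h0 := (hv false).2; have h1 := (hv true).1
      rw [QH.power_eq]; linarith
  have hV3 : ∀ x : ℝ, 1 ≤ x → QH.V QH.muTwo Gs Hs x = 1 := by
    intro x hx
    apply IsGreatest.csSup_eq
    constructor
    · refine ⟨fun _ => 1, ?_, ?_⟩
      · rw [QH.tests_iff]
        refine ⟨fun b => by simp, by linarith⟩
      · rw [QH.power_eq]; norm_num
    · rintro y ⟨X, hX, rfl⟩
      rw [QH.tests_iff] at hX
      obtain ⟨hv, -⟩ := hX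
      have h0 := (hv false).2; have h1 := (hv true).2
      rw [QH.power_eq]; linarith
  have hW1 : ∀ x : ℝ, 0 ≤ x → x < 1 / 4 → QH.V1 QH.muTwo Gs Hs x = 0 := by
    intro x hx0 hx
    apply IsGreatest.csSup_eq
    constructor
    · refine ⟨fun _ => 0, ⟨?_, fun ω => Or.inl rfl⟩, ?_⟩
      · rw [QH.tests_iff]
        refine ⟨fun b => by simp, by simp; linarith⟩
      · rw [QH.power_eq]; norm_num
    · rintro y ⟨X, ⟨hX, hp⟩, rfl⟩
      rw [QH.tests_iff] at hX
      obtain ⟨-, hc⟩ := hX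
      rw [QH.power_eq]
      rcases hp false with h0 | h0 <;> rcases hp true with h1 | h1 <;>
        rw [h0, h1] at hc ⊢ <;> linarith
  have hW2 : ∀ x : ℝ, 1 / 4 ≤ x → x < 1 → QH.V1 QH.muTwo Gs Hs x = 1 / 2 := by
    intro x hx0 hx
    apply IsGreatest.csSup_eq
    constructor
    · refine ⟨fun b => if b then 0 else 1, ⟨?_, fun ω => by cases ω <;> simp⟩, ?_⟩
      · rw [QH.tests_iff]
        refine ⟨fun b => by cases b <;> simp, by simp; linarith⟩
      · rw [QH.power_eq]; norm_num
    · rintro y ⟨X, ⟨hX, hp⟩, rfl⟩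
      rw [QH.tests_iff] at hX
      obtain ⟨-, hc⟩ := hX
      rw [QH.power_eq]
      rcases hp false with h0 | h0 <;> rcases hp true with h1 | h1 <;>
        rw [h0, h1] at hc ⊢ <;> linarith
  have hW3 : ∀ x : ℝ, 1 ≤ x → QH.V1 QH.muTwo Gs Hs x = 1 := by
    intro x hx
    apply IsGreatest.csSup_eq
    constructor
    · refine ⟨fun _ => 1, ⟨?_, fun ω => Or.inr rfl⟩, ?_⟩
      · rw [QH.tests_iff]
        refine ⟨fun b => by simp, by linarith⟩
      · rw [QH.power_eq]; norm_num
    · rintro y ⟨X, ⟨hX, hp⟩, rfl⟩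
      rw [QH.tests_iff] at hX
      obtain ⟨hv, -⟩ := hX
      have h0 := (hv false).2; have h1 := (hv true).2
      rw [QH.power_eq]; linarith
  refine ⟨hV1, hV2, hV3, hW1, hW2, hW3, ?_⟩
  intro x hx0 hx1 hxne
  rcases lt_trichotomy x (1/4) with h | h | h
  · rw [hW1 x hx0.le h, hV1 x hx0.le h]; linarith
  · exact absurd h hxne
  · rw [hW2 x h.le hx1, hV2 x h.le hx1]; linarith
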